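/- The weights identity: ((-1)^n / Γ(n)) · Σ over all set partitions π of {1,…,n} of [α^{-1} (-1)^{|π|} Γ(|π|) ∏_{B∈π} α^{(|B|)}] = 1, for any α ≠ 0 and n ≥ 1, where α^{(m)} is the falling factorial. -/

import Mathlib

open Finset

open OrderedFinpartition

namespace Stmt19

variable {n : ℕ}

/-- The `i`-th part of an ordered finpartition, as a `Finset`. -/
def pF (c : OrderedFinpartition n) (i : Fin c.length) : Finset (Fin n) :=
  Finset.image (c.emb i) Finset.univ

lemma mem_pF {c : OrderedFinpartition n} {i : Fin c.length} {x : Fin n} :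
    x ∈ pF c i ↔ x ∈ Set.range (c.emb i) := by
  simp [pF, Set.mem_range, eq_comm]

lemma coe_pF (c : OrderedFinpartition n) (i : Fin c.length) :
    (pF c i : Set (Fin n)) = Set.range (c.emb i) := by
  ext x; simp [mem_pF]

lemma card_pF (c : OrderedFinpartition n) (i : Fin c.length) :
    (pF c i).card = c.partSize i := by
  rw [pF, Finset.card_image_of_injective _ (c.emb_strictMono i).injective, Finset.card_univ,
    Fintype.card_fin]

lemma pF_nonempty (c : OrderedFinpartition n) (i : Fin c.length) :
    (pF c i).Nonempty := by
  refine ⟨c.emb i ⟨0, c.partSize_pos i⟩, ?_⟩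
  simp [mem_pF]

lemma pF_injective (c : OrderedFinpartition n) : Function.Injective (pF c) := by
  intro i j h
  by_contra hij
  have hd := c.disjoint (Set.mem_univ i) (Set.mem_univ j) hij
  have : (pF c i : Set (Fin n)) = ∅ := by
    have h2 := Set.disjoint_iff_inter_eq_empty.1 hd
    simp only [Function.onFun] at h2
    rw [← coe_pF, ← coe_pF, ← h] at h2
    simpa using h2
  obtain ⟨x, hx⟩ := pF_nonempty c i
  have : x ∈ (pF c i : Set (Fin n)) := by simpa using hx
  simp_all

lemma max'_pF (c : OrderedFinpartition n) (i : Fin c.length) :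
    (pF c i).max' (pF_nonempty c i)
      = c.emb i ⟨c.partSize i - 1, Nat.sub_one_lt_of_lt (c.partSize_pos i)⟩ := by
  apply le_antisymm
  · apply Finset.max'_le
    intro y hy
    obtain ⟨a, ha⟩ := mem_pF.1 hy
    subst ha
    refine (c.emb_strictMono i).monotone ?_
    have ha2 : (a : ℕ) < c.partSize i := a.2
    rw [Fin.le_def]
    show (a : ℕ) ≤ c.partSize i - 1
    omega
  · exact Finset.le_max' _ _ (by simp [mem_pF])

/-- The `Finpartition` associated to an ordered finpartition. -/
def toFP (c : OrderedFinpartition n) : Finpartition (Finset.univ : Finset (Fin n)) where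
  parts := Finset.image (pF c) Finset.univ
  supIndep := by
    rw [Finset.supIndep_iff_pairwiseDisjoint]
    rintro B hB B' hB' hne
    simp only [Finset.coe_image, Set.mem_image, Finset.mem_coe, Finset.mem_univ] at hB hB'
    obtain ⟨i, -, rfl⟩ := hB
    obtain ⟨j, -, rfl⟩ := hB'
    have hij : i ≠ j := fun h => hne (by rw [h])
    have hd := c.disjoint (Set.mem_univ i) (Set.mem_univ j) hij
    simp only [Function.onFun] at hd
    rw [Function.onFun, id, id, Finset.disjoint_coe.symm, coe_pF, coe_pF]
    exact hd
  sup_parts := by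
    apply Finset.Subset.antisymm (Finset.subset_univ _)
    intro x _
    obtain ⟨m, hm⟩ := c.cover x
    have : x ∈ pF c m := mem_pF.2 hm
    exact Finset.mem_sup.2 ⟨pF c m, Finset.mem_image_of_mem _ (Finset.mem_univ m), this⟩
  bot_notMem := by
    simp only [Finset.bot_eq_empty, Finset.mem_image, Finset.mem_univ, true_and]
    rintro ⟨i, hi⟩
    obtain ⟨x, hx⟩ := pF_nonempty c i
    rw [hi] at hx
    exact absurd hx (Finset.notMem_empty x)

lemma toFP_parts_card (c : OrderedFinpartition n) : (toFP c).parts.card = c.length := by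
  rw [toFP, Finset.card_image_of_injective _ (pF_injective c), Finset.card_univ, Fintype.card_fin]

lemma toFP_prod (c : OrderedFinpartition n) (h : ℕ → ℝ) :
    ∏ B ∈ (toFP c).parts, h B.card = ∏ i, h (c.partSize i) := by
  rw [toFP]
  rw [Finset.prod_image (fun i _ j _ hij => pF_injective c hij)]
  exact Finset.prod_congr rfl fun i _ => by rw [card_pF]

lemma max_pF (c : OrderedFinpartition n) (i : Fin c.length) :
    (pF c i).max = (c.emb i ⟨c.partSize i - 1, Nat.sub_one_lt_of_lt (c.partSize_pos i)⟩ :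
      Fin n) := by
  rw [← Finset.coe_max' (pF_nonempty c i), max'_pF]

lemma strictMono_max_pF (c : OrderedFinpartition n) :
    StrictMono fun i => (pF c i).max := by
  intro i j hij
  show (pF c i).max < (pF c j).max
  rw [max_pF, max_pF]
  exact_mod_cast WithBot.coe_lt_coe.2 (c.parts_strictMono hij)

lemma range_max_pF (c : OrderedFinpartition n) :
    Set.range (fun i => (pF c i).max) = Finset.max '' ((toFP c).parts : Set (Finset (Fin n))) := by
  rw [toFP]
  simp only [Finset.coe_image, Finset.coe_univ, Set.image_univ, ← Set.range_comp]
  rfl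

lemma toFP_injective : Function.Injective (toFP (n := n)) := by
  intro c c' h
  have hL : c.length = c'.length := by
    rw [← toFP_parts_card c, ← toFP_parts_card c', h]
  have hparts : Finset.image (pF c) Finset.univ = Finset.image (pF c') Finset.univ := by
    have := congrArg Finpartition.parts h
    simpa [toFP] using this
  -- the max functions agree
  have hcast : StrictMono (finCongr hL) := fun _ _ hab => hab
  have hsurj : Function.Surjective (finCongr hL) := fun x => ⟨(finCongr hL).symm x, by simp⟩
  have hmax : (fun i => (pF c i).max) = (fun i => (pF c' i).max) ∘ finCongr hL := by
    have i1 : WellFoundedLT (Fin c.length) := inferInstance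
    have h3 := @StrictMono.range_inj (Fin c.length) (WithBot (Fin n)) _ _ i1 _ _ (strictMono_max_pF c) ((strictMono_max_pF c').comp hcast)
    exact h3.1 (by rw [hsurj.range_comp, range_max_pF, h, range_max_pF])
  have key : ∀ i, pF c i = pF c' (finCongr hL i) := by
    intro i
    have h1 : pF c i ∈ Finset.image (pF c') Finset.univ := by
      rw [← hparts]; exact Finset.mem_image_of_mem _ (Finset.mem_univ i)
    obtain ⟨j, -, hj⟩ := Finset.mem_image.1 h1
    have : (pF c' j).max = (pF c' (finCongr hL i)).max := by
      have h2 := congrFun hmax i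
      simp only [Function.comp_apply] at h2
      rw [hj, h2]
    have hji : j = finCongr hL i := (strictMono_max_pF c').injective this
    rw [← hj, hji]
  -- now destruct the structures
  obtain ⟨L, ps, pos, emb, embmono, partsmono, disj, cov⟩ := c
  obtain ⟨L', ps', pos', emb', embmono', partsmono', disj', cov'⟩ := c'
  simp only at hL
  subst hL
  have hps : ps = ps' := by
    funext i
    have := congrArg Finset.card (key i)
    rwa [card_pF, card_pF] at this
  subst hps
  have hemb : emb = emb' := by
    funext i
    have hr : Set.range (emb i) = Set.range (emb' i) := by
      have := congrArg (fun s : Finset (Fin n) => (s : Set (Fin n))) (key i)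
      simpa [coe_pF] using this
    have i2 : WellFoundedLT (Fin (ps i)) := inferInstance
    exact (@StrictMono.range_inj (Fin (ps i)) (Fin n) _ _ i2 _ _ (embmono i) (embmono' i)).1 hr
  subst hemb
  rfl

section Surj

variable (P : Finpartition (Finset.univ : Finset (Fin n)))

/-- The finset of maxima of the parts. -/
def maxes : Finset (Fin n) :=
  P.parts.attach.image fun B => B.1.max' (P.nonempty_of_mem_parts B.2)

lemma maxes_card : (maxes P).card = P.parts.card := by
  rw [maxes, Finset.card_image_of_injective, Finset.card_attach]
  rintro ⟨B, hB⟩ ⟨B', hB'⟩ h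
  simp only at h
  have h1 : B.max' (P.nonempty_of_mem_parts hB) ∈ B := Finset.max'_mem _ _
  have h2 : B.max' (P.nonempty_of_mem_parts hB) ∈ B' := h ▸ Finset.max'_mem _ _
  exact Subtype.ext (P.eq_of_mem_parts hB hB' h1 h2)

lemma mem_maxes {x : Fin n} :
    x ∈ maxes P ↔ ∃ B ∈ P.parts, ∃ h : B.Nonempty, B.max' h = x := by
  simp only [maxes, Finset.mem_image, Finset.mem_attach, true_and, Subtype.exists]
  constructor
  · rintro ⟨B, hB, rfl⟩; exact ⟨B, hB, _, rfl⟩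
  · rintro ⟨B, hB, h, rfl⟩; exact ⟨B, hB, rfl⟩

/-- Enumeration of the maxima in increasing order. -/
noncomputable def maxEnum : Fin P.parts.card ↪o Fin n :=
  (maxes P).orderEmbOfFin (maxes_card P)

lemma maxEnum_mem (i : Fin P.parts.card) : maxEnum P i ∈ maxes P :=
  Finset.orderEmbOfFin_mem _ _ _

/-- The part whose max is the `i`-th max. -/
noncomputable def pt (i : Fin P.parts.card) : Finset (Fin n) :=
  P.part (maxEnum P i)

lemma pt_mem (i : Fin P.parts.card) : pt P i ∈ P.parts := by
  apply (Finpartition.part_mem P).2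
  simp

lemma pt_spec (i : Fin P.parts.card) :
    ∃ h : (pt P i).Nonempty, (pt P i).max' h = maxEnum P i := by
  obtain ⟨B, hB, h, hmax⟩ := (mem_maxes P).1 (maxEnum_mem P i)
  have : pt P i = B := by
    apply P.part_eq_of_mem hB
    rw [← hmax]
    exact Finset.max'_mem _ _
  rw [this]
  exact ⟨h, hmax⟩

lemma pt_injective : Function.Injective (pt P) := by
  intro i j h
  obtain ⟨hi, hmi⟩ := pt_spec P i
  obtain ⟨hj, hmj⟩ := pt_spec P j
  apply (maxEnum P).injective
  rw [← hmi, ← hmj]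
  congr 1

lemma pt_surjective {B : Finset (Fin n)} (hB : B ∈ P.parts) : ∃ i, pt P i = B := by
  have hmem : B.max' (P.nonempty_of_mem_parts hB) ∈ maxes P :=
    (mem_maxes P).2 ⟨B, hB, _, rfl⟩
  have : ∃ i, maxEnum P i = B.max' (P.nonempty_of_mem_parts hB) := by
    have := Finset.range_orderEmbOfFin (maxes P) (maxes_card P)
    rw [maxEnum]
    have h2 : (B.max' (P.nonempty_of_mem_parts hB) : Fin n) ∈
        Set.range ((maxes P).orderEmbOfFin (maxes_card P)) := by
      rw [this]; exact_mod_cast hmem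
    exact h2
  obtain ⟨i, hi⟩ := this
  refine ⟨i, ?_⟩
  rw [pt, hi]
  exact P.part_eq_of_mem hB (Finset.max'_mem _ _)

/-- Build an ordered finpartition from a finpartition of `univ : Finset (Fin n)`. -/
noncomputable def ofFP : OrderedFinpartition n where
  length := P.parts.card
  partSize i := (pt P i).card
  partSize_pos i := Finset.card_pos.2 (P.nonempty_of_mem_parts (pt_mem P i))
  emb i := (pt P i).orderEmbOfFin rfl
  emb_strictMono i := ((pt P i).orderEmbOfFin rfl).strictMono
  parts_strictMono := by
    intro i j hij
    have hi := pt_spec P i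
    have hj := pt_spec P j
    obtain ⟨hi1, hi2⟩ := hi
    obtain ⟨hj1, hj2⟩ := hj
    have ei : (pt P i).orderEmbOfFin rfl ⟨(pt P i).card - 1, _⟩ = (pt P i).max' hi1 :=
      Finset.orderEmbOfFin_last rfl (Finset.card_pos.2 hi1)
    have ej : (pt P j).orderEmbOfFin rfl ⟨(pt P j).card - 1, _⟩ = (pt P j).max' hj1 :=
      Finset.orderEmbOfFin_last rfl (Finset.card_pos.2 hj1)
    simp only
    rw [ei, ej, hi2, hj2]
    exact (maxEnum P).strictMono hij
  disjoint := by
    intro i _ j _ hij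
    have hne : pt P i ≠ pt P j := fun h => hij (pt_injective P h)
    have hd := P.disjoint (pt_mem P i) (pt_mem P j) hne
    simp only [Function.onFun]
    rw [Finset.range_orderEmbOfFin, Finset.range_orderEmbOfFin]
    simp only [Function.onFun, id] at hd
    exact Finset.disjoint_coe.mpr hd
  cover := by
    intro x
    have hx : x ∈ P.part x := P.mem_part (Finset.mem_univ x)
    obtain ⟨i, hi⟩ := pt_surjective P ((P.part_mem).2 (Finset.mem_univ x))
    refine ⟨i, ?_⟩
    rw [Finset.range_orderEmbOfFin, hi]
    exact_mod_cast hx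

lemma pF_ofFP (i : Fin (ofFP P).length) :
    pF (ofFP P) i = pt P i := by
  apply Finset.ext
  intro x
  rw [mem_pF]
  show x ∈ Set.range ((pt P i).orderEmbOfFin rfl) ↔ _
  rw [Finset.range_orderEmbOfFin]
  simp

lemma toFP_ofFP : toFP (ofFP P) = P := by
  apply Finpartition.ext
  apply Finset.Subset.antisymm
  · intro B hB
    simp only [toFP, Finset.mem_image, Finset.mem_univ, true_and] at hB
    obtain ⟨i, rfl⟩ := hB
    rw [pF_ofFP]
    exact pt_mem P i
  · intro B hB
    obtain ⟨i, hi⟩ := pt_surjective P hB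
    simp only [toFP, Finset.mem_image, Finset.mem_univ, true_and]
    exact ⟨i, (pF_ofFP P i).trans hi⟩

end Surj

/-- The summand. -/
noncomputable def Fw (α : ℝ) {n : ℕ} (c : OrderedFinpartition n) : ℝ :=
  (-1 : ℝ) ^ c.length * Real.Gamma c.length *
    ∏ i, (descPochhammer ℝ (c.partSize i)).eval α

lemma sum_partSize (c : OrderedFinpartition n) : ∑ i, c.partSize i = n := by
  have := Fintype.card_congr c.equivSigma
  simpa using this

lemma eval_descPochhammer_succ (α : ℝ) (m : ℕ) :
    (descPochhammer ℝ (m + 1)).eval α = (descPochhammer ℝ m).eval α * (α - m) := by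
  rw [descPochhammer_succ_right]
  simp

lemma step (α : ℝ) {n : ℕ} (hn : 1 ≤ n) (c : OrderedFinpartition n) :
    Fw α c.extendLeft + ∑ k, Fw α (c.extendMiddle k) = -(n : ℝ) * Fw α c := by
  have hL : 0 < c.length := c.length_pos hn
  set L := c.length with hLdef
  set P : ℝ := ∏ i, (descPochhammer ℝ (c.partSize i)).eval α with hP
  -- extendLeft
  have h1 : Fw α c.extendLeft = (-1) ^ (L + 1) * ((L : ℝ) * Real.Gamma L) * ((descPochhammer ℝ 1).eval α * P) := by
    rw [Fw]
    have hlen : c.extendLeft.length = L + 1 := rfl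
    have hps : c.extendLeft.partSize = Fin.cons 1 c.partSize := rfl
    have hprod : ∏ i, (descPochhammer ℝ (c.extendLeft.partSize i)).eval α
        = (descPochhammer ℝ 1).eval α * P := by
      change ∏ i : Fin (L + 1),
          (descPochhammer ℝ ((Fin.cons 1 c.partSize : Fin (L + 1) → ℕ) i)).eval α = _
      rw [Fin.prod_univ_succ, hP]
      simp
      left; rfl
    rw [hprod, hlen]
    have : Real.Gamma (L + 1 : ℕ) = (L : ℝ) * Real.Gamma L := by
      push_cast
      rw [Real.Gamma_add_one (by positivity)]
    rw [this]
  -- extendMiddle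
  have h2 : ∀ k, Fw α (c.extendMiddle k) =
      (-1) ^ L * Real.Gamma L * ((α - c.partSize k) * P) := by
    intro k
    rw [Fw]
    have hlen : (c.extendMiddle k).length = L := rfl
    have hprod : ∏ i, (descPochhammer ℝ ((c.extendMiddle k).partSize i)).eval α
        = (α - c.partSize k) * P := by
      have hps : (c.extendMiddle k).partSize
          = Function.update c.partSize k (c.partSize k + 1) := rfl
      rw [show (∏ i, (descPochhammer ℝ ((c.extendMiddle k).partSize i)).eval α)
          = ∏ i, ((fun m => (descPochhammer ℝ m).eval α) ∘
              Function.update c.partSize k (c.partSize k + 1)) i from rfl]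
      rw [Function.comp_update]
      rw [Finset.prod_update_of_mem (Finset.mem_univ k)]
      simp only [Function.comp_apply]
      rw [eval_descPochhammer_succ, mul_comm ((descPochhammer ℝ (c.partSize k)).eval α) (α - c.partSize k), mul_assoc]
      rw [show (Finset.univ \ {k} : Finset (Fin c.length)) = Finset.univ.erase k by
        rw [Finset.sdiff_singleton_eq_erase]]
      rw [Finset.mul_prod_erase Finset.univ (fun i => (descPochhammer ℝ (c.partSize i)).eval α) (Finset.mem_univ k)]
    rw [hprod, hlen]
  rw [h1, Finset.sum_congr rfl fun k _ => h2 k]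
  have hsum : ∑ k, ((-1 : ℝ)) ^ L * Real.Gamma L * ((α - c.partSize k) * P)
      = (-1) ^ L * Real.Gamma L * (((L : ℝ) * α - n) * P) := by
    rw [← Finset.mul_sum, ← Finset.sum_mul]
    congr 2
    rw [Finset.sum_sub_distrib, Finset.sum_const, Finset.card_univ, Fintype.card_fin]
    congr 1
    · rw [nsmul_eq_mul, mul_comm]
    · rw [← Nat.cast_sum, sum_partSize]
  have h3 : Fw α c = (-1) ^ L * Real.Gamma L * P := rfl
  rw [hsum, h3]
  have hd1 : (descPochhammer ℝ 1).eval α = α := by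
    rw [descPochhammer_one]; simp
  rw [hd1, pow_succ]
  ring

lemma toFP_bijective : Function.Bijective (toFP (n := n)) :=
  ⟨toFP_injective, fun P => ⟨ofFP P, toFP_ofFP P⟩⟩

/-- The total sum. -/
noncomputable def g (α : ℝ) (n : ℕ) : ℝ := ∑ c : OrderedFinpartition n, Fw α c

lemma g_succ (α : ℝ) {n : ℕ} (hn : 1 ≤ n) : g α (n + 1) = -(n : ℝ) * g α n := by
  have h1 : ∑ c : OrderedFinpartition (n + 1), Fw α c
      = ∑ x : Σ c : OrderedFinpartition n, Option (Fin c.length),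
          Fw α (extendEquiv n x) :=
    (Fintype.sum_equiv (extendEquiv n) _ _ (fun x => rfl)).symm
  rw [g, h1, ← Finset.univ_sigma_univ, Finset.sum_sigma]
  have h2 : ∀ c : OrderedFinpartition n,
      ∑ o : Option (Fin c.length), Fw α (extendEquiv n ⟨c, o⟩) = -(n : ℝ) * Fw α c := by
    intro c
    rw [Fintype.sum_option]
    exact step α hn c
  rw [Finset.sum_congr rfl fun c _ => h2 c, ← Finset.mul_sum, g]

lemma g_one (α : ℝ) : g α 1 = -α := by
  have h1 : ∑ c : OrderedFinpartition 1, Fw α c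
      = ∑ x : Σ c : OrderedFinpartition 0, Option (Fin c.length),
          Fw α (extendEquiv 0 x) :=
    (Fintype.sum_equiv (extendEquiv 0) _ _ (fun x => rfl)).symm
  rw [g, h1, ← Finset.univ_sigma_univ, Finset.sum_sigma]
  rw [Fintype.sum_unique]
  rw [Fintype.sum_option]
  have hlen : (default : OrderedFinpartition 0).length = 0 := rfl
  have h0 : ∑ k : Fin (default : OrderedFinpartition 0).length,
      Fw α (extendEquiv 0 ⟨default, some k⟩) = 0 := by
    haveI : IsEmpty (Fin (default : OrderedFinpartition 0).length) :=
      ⟨fun k => Nat.not_lt_zero k.val k.2⟩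
    rw [Finset.univ_eq_empty, Finset.sum_empty]
  rw [h0, add_zero]
  show Fw α (default : OrderedFinpartition 0).extendLeft = -α
  rw [Fw]
  show (-1 : ℝ) ^ (0 + 1) * Real.Gamma ((0 + 1 : ℕ) : ℝ) *
      ∏ i : Fin (0 + 1),
        (descPochhammer ℝ
          ((Fin.cons 1 (default : OrderedFinpartition 0).partSize : Fin (0 + 1) → ℕ) i)).eval α
      = -α
  rw [Fin.prod_univ_one]
  simp [descPochhammer_one, Real.Gamma_one]

lemma g_closed (α : ℝ) : ∀ n : ℕ, 1 ≤ n → g α n = (-1) ^ n * (n - 1).factorial * α := by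
  intro n hn
  induction n, hn using Nat.le_induction with
  | base => rw [g_one]; simp
  | succ n hn ih =>
    rw [g_succ α hn, ih]
    have : ((n - 1).factorial : ℝ) * n = (n.factorial : ℝ) := by
      rw [mul_comm, ← Nat.cast_mul, Nat.mul_factorial_pred (by omega)]
    push_cast
    rw [pow_succ]
    linear_combination -(-1 : ℝ) ^ n * α * this

end Stmt19

open Stmt19

/-- The mixture weights sum to one:
`((-1)^n / Γ(n)) ∑_π α⁻¹ (-1)^{|π|} Γ(|π|) ∏_{B∈π} α^{(|B|)} = 1`
for `α ≠ 0` and `n ≥ 1`, the sum running over all set partitions of `{1,…,n}`,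
where `α^{(m)}` is the falling factorial. -/
theorem stmt_19 (α : ℝ) (hα : α ≠ 0) (n : ℕ) (hn : 1 ≤ n) :
    (-1 : ℝ) ^ n / Real.Gamma n *
        ∑ P : Finpartition (Finset.univ : Finset (Fin n)),
          α⁻¹ * (-1 : ℝ) ^ P.parts.card * Real.Gamma P.parts.card *
            ∏ B ∈ P.parts, (descPochhammer ℝ B.card).eval α = 1 := by
  have hsum : ∑ P : Finpartition (Finset.univ : Finset (Fin n)),
      α⁻¹ * (-1 : ℝ) ^ P.parts.card * Real.Gamma P.parts.card *
        ∏ B ∈ P.parts, (descPochhammer ℝ B.card).eval α = α⁻¹ * g α n := by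
    rw [g, Finset.mul_sum]
    refine (Fintype.sum_bijective toFP toFP_bijective _ _ fun c => ?_).symm
    rw [Fw, toFP_parts_card, toFP_prod c (fun m => (descPochhammer ℝ m).eval α)]
    ring
  rw [hsum, g_closed α n hn]
  obtain ⟨m, rfl⟩ : ∃ m, n = m + 1 := ⟨n - 1, by omega⟩
  rw [show ((m + 1 : ℕ) : ℝ) = (m : ℝ) + 1 by push_cast; ring, Real.Gamma_nat_eq_factorial]
  rw [show m + 1 - 1 = m from rfl]
  have hm : (m.factorial : ℝ) ≠ 0 := Nat.cast_ne_zero.2 m.factorial_ne_zero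
  have hsq : ((-1 : ℝ) ^ (m + 1)) * ((-1 : ℝ) ^ (m + 1)) = 1 := by
    rw [← pow_add]
    exact Even.neg_one_pow ⟨m + 1, by ring⟩
  field_simp
  nlinarith [hsq]
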